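/- Let (M, f) be a unique factorisation n-magma with all arities n i ≥ 1. Then (M, f) admits a norm ν : M → ℕ if and only if it has finite decomposition, i.e. the immediate-factor relation r on M is well-founded. -/

import Mathlib

/-- Let `(M, f)` be a unique factorisation `n`-magma with all arities
`n i ≥ 1`.  Then `(M, f)` admits a norm `ν : M → ℕ` if and only if it has finite
decomposition, i.e. the immediate-factor relation on `M` is well-founded. -/
theorem stmt1 {k : ℕ} (n : Fin k → ℕ) (hn : ∀ i, 1 ≤ n i)
    {M : Type*}
    (f : ∀ i : Fin k, (Fin (n i) → M) → M)
    (hinj : ∀ i, Function.Injective (f i))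
    (hdisj : ∀ i j, i ≠ j → ∀ (a : Fin (n i) → M) (b : Fin (n j) → M), f i a ≠ f j b) :
    (∃ ν : M → ℕ,
        (∀ m, 1 ≤ ν m) ∧
        (∀ (i : Fin k) (a : Fin (n i) → M), n i = 1 → ν (a ⟨0, hn i⟩) < ν (f i a)) ∧
        (∀ (i : Fin k) (a : Fin (n i) → M), 2 ≤ n i → ∑ j, ν (a j) ≤ ν (f i a))) ↔
      WellFounded (fun a b : M =>
        ∃ (i : Fin k) (v : Fin (n i) → M) (j : Fin (n i)), b = f i v ∧ a = v j) := by
  classical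
  constructor
  · rintro ⟨ν, h1, h2, h3⟩
    have key : ∀ a b : M,
        (∃ (i : Fin k) (v : Fin (n i) → M) (j : Fin (n i)), b = f i v ∧ a = v j) →
        ν a < ν b := by
      rintro a b ⟨i, v, j, rfl, rfl⟩
      rcases eq_or_lt_of_le (hn i) with h | h
      · have hj : j = ⟨0, hn i⟩ := by
          have hlt := j.isLt
          apply Fin.ext
          omega
        rw [hj]
        exact h2 i v h.symm
      · refine lt_of_lt_of_le ?_ (h3 i v h)
        obtain ⟨j', hj'⟩ : ∃ j' : Fin (n i), j ≠ j' := by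
          rcases Nat.eq_zero_or_pos j.val with h0 | h0
          · refine ⟨⟨1, h⟩, fun he => ?_⟩
            have := congrArg Fin.val he; simp at this; omega
          · refine ⟨⟨0, hn i⟩, fun he => ?_⟩
            have := congrArg Fin.val he; simp at this; omega
        exact Finset.single_lt_sum (f := fun j => ν (v j)) (Ne.symm hj') (Finset.mem_univ _) (Finset.mem_univ _)
          (h1 (v j')) (fun _ _ _ => Nat.zero_le _)
    exact Subrelation.wf (fun {a b} h => key a b h) (measure ν).wf
  · intro hwf
    set F : ∀ m : M, (∀ y : M,
        (∃ (i : Fin k) (v : Fin (n i) → M) (j : Fin (n i)), m = f i v ∧ y = v j) → ℕ) → ℕ :=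
      fun m IH =>
        if h : ∃ (i : Fin k) (a : Fin (n i) → M), m = f i a then
          1 + ∑ j, IH (h.choose_spec.choose j)
            ⟨h.choose, h.choose_spec.choose, j, h.choose_spec.choose_spec, rfl⟩
        else 1 with hF
    set ν : M → ℕ := hwf.fix F with hν
    have hfix : ∀ m, ν m =
        if h : ∃ (i : Fin k) (a : Fin (n i) → M), m = f i a then
          1 + ∑ j, ν (h.choose_spec.choose j)
        else 1 := by
      intro m
      rw [hν, hwf.fix_eq]
    have hval : ∀ (i : Fin k) (a : Fin (n i) → M), ν (f i a) = 1 + ∑ j, ν (a j) := by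
      intro i a
      have h : ∃ (i' : Fin k) (a' : Fin (n i') → M), f i a = f i' a' := ⟨i, a, rfl⟩
      rw [hfix, dif_pos h]
      have aux : ∀ (i' : Fin k) (a' : Fin (n i') → M), f i a = f i' a' →
          (∑ j, ν (a' j)) = ∑ j, ν (a j) := by
        intro i' a' hsp
        have hi : i' = i := by
          by_contra hne
          exact hdisj i' i hne a' a hsp.symm
        subst hi
        rw [hinj i' hsp.symm]
      rw [aux h.choose h.choose_spec.choose h.choose_spec.choose_spec]
    refine ⟨ν, ?_, ?_, ?_⟩
    · intro m
      rw [hfix]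
      split
      · exact Nat.le_add_right 1 _
      · exact le_refl 1
    · intro i a _
      rw [hval]
      calc ν (a ⟨0, hn i⟩) ≤ ∑ j, ν (a j) :=
            Finset.single_le_sum (f := fun j => ν (a j)) (fun _ _ => Nat.zero_le _)
              (Finset.mem_univ (⟨0, hn i⟩ : Fin (n i)))
        _ < 1 + ∑ j, ν (a j) := by omega
    · intro i a _
      rw [hval]
      omega
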